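/- For every natural number i, setting a = Fᵢ·Fᵢ₊₃ and ψ = Fᵢ₊₁² + Fᵢ₊₂², the integers θ₁ = -(Fᵢ₊₂ - Fᵢ₊₁)² and θ₂ = -(Fᵢ₊₁ + Fᵢ₊₂)² are roots of the quadratic a·x² + 2aψ·x + a³, i.e., a·θ₁² + 2aψ·θ₁ + a³ = 0 and a·θ₂² + 2aψ·θ₂ + a³ = 0 (as integers). -/
import Mathlib

theorem fib_quadratic_roots_f (i : ℕ) :
    ((Nat.fib i * Nat.fib (i + 3) : ℤ) * (-(((Nat.fib (i + 2) : ℤ) - Nat.fib (i + 1)) ^ 2)) ^ 2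
      + 2 * (Nat.fib i * Nat.fib (i + 3) : ℤ) * ((Nat.fib (i + 1) : ℤ) ^ 2 + (Nat.fib (i + 2) : ℤ) ^ 2)
          * (-(((Nat.fib (i + 2) : ℤ) - Nat.fib (i + 1)) ^ 2))
      + (Nat.fib i * Nat.fib (i + 3) : ℤ) ^ 3 = 0) ∧
    ((Nat.fib i * Nat.fib (i + 3) : ℤ) * (-(((Nat.fib (i + 1) : ℤ) + Nat.fib (i + 2)) ^ 2)) ^ 2
      + 2 * (Nat.fib i * Nat.fib (i + 3) : ℤ) * ((Nat.fib (i + 1) : ℤ) ^ 2 + (Nat.fib (i + 2) : ℤ) ^ 2)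
          * (-(((Nat.fib (i + 1) : ℤ) + Nat.fib (i + 2)) ^ 2))
      + (Nat.fib i * Nat.fib (i + 3) : ℤ) ^ 3 = 0) := by
  have h1 : (Nat.fib i : ℤ) = Nat.fib (i + 2) - Nat.fib (i + 1) := by
    have := Nat.fib_add_two (n := i); push_cast [this]; ring
  have h2 : (Nat.fib (i + 3) : ℤ) = Nat.fib (i + 1) + Nat.fib (i + 2) := by
    have := Nat.fib_add_two (n := i + 1)
    show ((Nat.fib (i + 1 + 2) : ℕ) : ℤ) = _
    push_cast [this]; ring
  rw [h1, h2]
  constructor <;> ring
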